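/- For every integer N ≥ 2 and residue r ∈ ℤ/Nℤ, the number of tuples ℓ ∈ (ℤ/Nℤ)^N with N·H(ℓ) ≡ r (mod N) equals N^(N-1), where H(m) := (1/2)·mᵀm + bᵀm with b = (1/N - 1/2, 2/N - 1/2, …, 1/2)ᵀ. -/

import Mathlib

/-- For an integer vector `m : Fin N → ℤ`, the integer
`N·H(m) = ∑_j (N(m_j² - m_j)/2 + (j+1)·m_j)`, where
`H(m) = (1/2)mᵀm + ∑_j ((j+1)/N - 1/2)·m_j` (indices j+1 running through 1,…,N).
Since `m_j² - m_j` is even, the division is exact. -/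
def NH (N : ℕ) (m : Fin N → ℤ) : ℤ :=
  ∑ j : Fin N, ((N : ℤ) * ((m j) ^ 2 - m j) / 2 + ((j : ℕ) + 1 : ℤ) * m j)

lemma NH_cast (n : ℕ) (ℓ : Fin (n+1) → ZMod (n+1)) :
    ((NH (n+1) (fun j => ((ℓ j).val : ℤ)) : ZMod (n+1))) =
      ∑ j : Fin (n+1), (((j : ℕ) + 1 : ℕ) : ZMod (n+1)) * ℓ j := by
  unfold NH
  rw [Int.cast_sum]
  refine Finset.sum_congr rfl fun j _ => ?_
  set m : ℤ := ((ℓ j).val : ℤ) with hm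
  have h2 : (2:ℤ) ∣ m ^ 2 - m := by
    have h := (Int.even_mul_succ_self (m - 1)).two_dvd
    have e : m ^ 2 - m = (m - 1) * (m - 1 + 1) := by ring
    rw [e]; exact h
  rw [Int.mul_ediv_assoc _ h2]
  have h0 : ((n : ZMod (n+1)) + 1) = 0 := by exact_mod_cast ZMod.natCast_self (n+1)
  push_cast [hm]
  rw [h0]
  simp [ZMod.natCast_val, ZMod.cast_id]

/-- For N ≥ 2 and any residue r ∈ ℤ/Nℤ, the number of tuples ℓ ∈ (ℤ/Nℤ)^N with
N·H(ℓ) ≡ r (mod N) equals N^(N-1). -/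
theorem count_tuples (N : ℕ) (hN : 2 ≤ N) (r : ZMod N) :
    Nat.card {ℓ : Fin N → ZMod N //
      ((NH N (fun j => ((ℓ j).val : ℤ)) : ZMod N) = r)} = N ^ (N - 1) := by
  obtain ⟨n, rfl⟩ : ∃ n, N = n + 1 := ⟨N - 1, by omega⟩
  have key := NH_cast n
  have e : {ℓ : Fin (n+1) → ZMod (n+1) //
      ((NH (n+1) (fun j => ((ℓ j).val : ℤ)) : ZMod (n+1)) = r)} ≃ (Fin n → ZMod (n+1)) := by
    refine
      { toFun := fun p j => p.1 j.succ
        invFun := fun g => ⟨Fin.cons (r - ∑ j : Fin n, (((j : ℕ) + 2 : ℕ) : ZMod (n+1)) * g j) g, ?_⟩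
        left_inv := ?_
        right_inv := ?_ }
    · rw [key, Fin.sum_univ_succ]
      simp only [Fin.cons_zero, Fin.cons_succ, Fin.val_zero, Fin.val_succ]
      have hs : ∑ j : Fin n, ((((j : ℕ) + 1 + 1 : ℕ)) : ZMod (n+1)) * g j
          = ∑ j : Fin n, ((((j : ℕ) + 2 : ℕ)) : ZMod (n+1)) * g j := by
        refine Finset.sum_congr rfl fun j _ => ?_
        push_cast; ring
      rw [hs]
      norm_num
    · rintro ⟨ℓ, hℓ⟩
      ext j
      refine Fin.cases ?_ (fun i => ?_) j
      · rw [key, Fin.sum_univ_succ] at hℓ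
        simp only [Fin.val_zero, Fin.val_succ, zero_add, Nat.cast_one, one_mul] at hℓ
        simp only [Fin.cons_zero]
        have hs : ∑ j : Fin n, ((((j : ℕ) + 1 + 1 : ℕ)) : ZMod (n+1)) * ℓ j.succ
            = ∑ j : Fin n, ((((j : ℕ) + 2 : ℕ)) : ZMod (n+1)) * ℓ j.succ := by
          refine Finset.sum_congr rfl fun j _ => ?_
          push_cast; ring
        rw [hs] at hℓ
        linear_combination -hℓ
      · simp [Fin.cons_succ]
    · intro g
      funext j
      simp [Fin.cons_succ]
  rw [Nat.card_congr e]
  simp [Nat.card_eq_fintype_card]
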